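/- Let ν¹ = ν*¹ + iν̃¹ be a complex eigenvector of B = Aᵀ with eigenvalue λ₁ = λ₁* + iλ̃₁ (λ̃₁ ≠ 0), and ν² a real eigenvector of B with real eigenvalue λ₂. Then F(x) = (ν²·x) · exp(−(λ₂/λ̃₁) · arctan((ν̃¹·x)/(ν*¹·x))) is an autonomous first integral of dx/dt = Ax on any open set where ν*¹·x ≠ 0. -/

import Mathlib

open Matrix

noncomputable def dotCLM (n : ℕ) (v : Fin n → ℝ) : (Fin n → ℝ) →L[ℝ] ℝ :=
  ∑ i, v i • (ContinuousLinearMap.proj i : (Fin n → ℝ) →L[ℝ] ℝ)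

lemma dotCLM_apply (n : ℕ) (v h : Fin n → ℝ) : dotCLM n v h = v ⬝ᵥ h := by
  simp [dotCLM, dotProduct, ContinuousLinearMap.sum_apply]

lemma hasFDerivAt_dot (n : ℕ) (v : Fin n → ℝ) (x : Fin n → ℝ) :
    HasFDerivAt (fun y => v ⬝ᵥ y) (dotCLM n v) x := by
  have : HasFDerivAt (fun y : Fin n → ℝ => ∑ i, v i * y i)
      (∑ i, v i • (ContinuousLinearMap.proj i : (Fin n → ℝ) →L[ℝ] ℝ)) x := by
    refine HasFDerivAt.fun_sum fun i _ => ?_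
    exact ((ContinuousLinearMap.proj i : (Fin n → ℝ) →L[ℝ] ℝ).hasFDerivAt).const_mul (v i)
  simpa [dotProduct, dotCLM] using this

lemma real_eigen_parts (n : ℕ) (A : Matrix (Fin n) (Fin n) ℝ)
    (νs₁ νt₁ : Fin n → ℝ) (lams₁ lamt₁ : ℝ)
    (heig₁ : (A.map Complex.ofReal)ᵀ.mulVec (fun i => (νs₁ i : ℂ) + νt₁ i * Complex.I)
      = ((lams₁ : ℂ) + lamt₁ * Complex.I) • (fun i => (νs₁ i : ℂ) + νt₁ i * Complex.I)) :
    Aᵀ.mulVec νs₁ = lams₁ • νs₁ - lamt₁ • νt₁ ∧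
    Aᵀ.mulVec νt₁ = lamt₁ • νs₁ + lams₁ • νt₁ := by
  have key : ∀ i, ((Aᵀ.mulVec νs₁) i : ℂ) + (Aᵀ.mulVec νt₁) i * Complex.I
      = ((lams₁ * νs₁ i - lamt₁ * νt₁ i : ℝ) : ℂ)
        + ((lamt₁ * νs₁ i + lams₁ * νt₁ i : ℝ) : ℂ) * Complex.I := by
    intro i
    have h := congrFun heig₁ i
    simp only [Matrix.mulVec, dotProduct, Matrix.transpose_apply, Matrix.map_apply,
      Pi.smul_apply, smul_eq_mul] at h ⊢
    push_cast
    rw [Finset.sum_congr rfl (fun j _ => by ring :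
      ∀ j ∈ Finset.univ, ((A j i : ℂ)) * ((νs₁ j : ℂ) + νt₁ j * Complex.I)
        = (A j i * νs₁ j : ℂ) + (A j i * νt₁ j : ℂ) * Complex.I)] at h
    rw [Finset.sum_add_distrib, ← Finset.sum_mul] at h
    rw [h]; ring_nf; rw [Complex.I_sq]; ring
  constructor <;> funext i <;> have h := key i
  · have := congrArg Complex.re h
    simpa using this
  · have := congrArg Complex.im h
    simpa using this


/-- Theorem 1.3: `ν¹ = ν*¹ + iν̃¹` a complex eigenvector of `Aᵀ` with eigenvalue
`λ₁ = λ₁* + iλ̃₁` (`λ̃₁ ≠ 0`), and `ν²` a real eigenvector with real eigenvalue `λ₂`;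
then `F(x) = (ν²·x)·exp(−(λ₂/λ̃₁)·arctan((ν̃¹·x)/(ν*¹·x)))` is an autonomous first
integral of `dx/dt = Ax` wherever `ν*¹·x ≠ 0`. -/
theorem first_integral_complex_and_real_eigenvectors
    (n : ℕ) (A : Matrix (Fin n) (Fin n) ℝ)
    (νs₁ νt₁ ν₂ : Fin n → ℝ) (lams₁ lamt₁ lam₂ : ℝ) (hlamt₁ : lamt₁ ≠ 0)
    (hν₁ : (fun i => (νs₁ i : ℂ) + νt₁ i * Complex.I) ≠ (0 : Fin n → ℂ))
    (hν₂ : ν₂ ≠ 0)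
    (heig₁ : (A.map Complex.ofReal)ᵀ.mulVec (fun i => (νs₁ i : ℂ) + νt₁ i * Complex.I)
      = ((lams₁ : ℂ) + lamt₁ * Complex.I) • (fun i => (νs₁ i : ℂ) + νt₁ i * Complex.I))
    (heig₂ : Aᵀ.mulVec ν₂ = lam₂ • ν₂) :
    ∀ x : Fin n → ℝ, νs₁ ⬝ᵥ x ≠ 0 →
      fderiv ℝ (fun y => (ν₂ ⬝ᵥ y)
          * Real.exp (-(lam₂ / lamt₁) * Real.arctan ((νt₁ ⬝ᵥ y) / (νs₁ ⬝ᵥ y))))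
        x (A.mulVec x) = 0 := by
  intro x hvx
  obtain ⟨hAs, hAt⟩ := real_eigen_parts n A νs₁ νt₁ lams₁ lamt₁ heig₁
  -- eigen-identities in dot-product form
  have hdotv : ∀ (w : Fin n → ℝ), w ⬝ᵥ A.mulVec x = (Aᵀ.mulVec w) ⬝ᵥ x := by
    intro w
    rw [Matrix.dotProduct_mulVec, ← Matrix.mulVec_transpose]
  set ux := νt₁ ⬝ᵥ x with hux
  set vx := νs₁ ⬝ᵥ x with hvxdef
  set gx := ν₂ ⬝ᵥ x with hgx
  have hus : νt₁ ⬝ᵥ A.mulVec x = lamt₁ * vx + lams₁ * ux := by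
    rw [hdotv, hAt]; simp [add_dotProduct, smul_dotProduct]; rfl
  have hvs : νs₁ ⬝ᵥ A.mulVec x = lams₁ * vx - lamt₁ * ux := by
    rw [hdotv, hAs]; simp [sub_dotProduct, smul_dotProduct]; rfl
  have hgs : ν₂ ⬝ᵥ A.mulVec x = lam₂ * gx := by
    rw [hdotv, heig₂]; simp [smul_dotProduct]; exact Or.inl rfl
  -- build the derivative
  have hu := hasFDerivAt_dot n νt₁ x
  have hv := hasFDerivAt_dot n νs₁ x
  have hg := hasFDerivAt_dot n ν₂ x
  have hinv := (hasDerivAt_inv hvx).comp_hasFDerivAt x hv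
  have hdiv' := hu.mul hinv
  have hdiv : HasFDerivAt (fun y => (νt₁ ⬝ᵥ y) / (νs₁ ⬝ᵥ y))
      (-((νt₁ ⬝ᵥ x) • ((νs₁ ⬝ᵥ x) ^ 2)⁻¹ • dotCLM n νs₁) + (νs₁ ⬝ᵥ x)⁻¹ • dotCLM n νt₁) x := by
    simpa [div_eq_mul_inv, Pi.mul_def, Function.comp_def] using hdiv'
  have harctan := hdiv.arctan
  have hconst := harctan.const_mul (-(lam₂ / lamt₁))
  have hexp := hconst.exp
  have hF := hg.fun_mul hexp
  rw [hF.fderiv]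
  simp only [ContinuousLinearMap.add_apply, ContinuousLinearMap.smul_apply,
    ContinuousLinearMap.sub_apply, ContinuousLinearMap.neg_apply, smul_eq_mul, dotCLM_apply]
  rw [hus, hvs, hgs]
  have hsq : vx ^ 2 + ux ^ 2 ≠ 0 := by positivity
  have h1 : (1 : ℝ) + (ux / vx) ^ 2 ≠ 0 := by positivity
  rw [← hvxdef, ← hux, ← hgx]
  field_simp
  ring
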